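/- Every strictly alternating bargraph with at least two H steps can be uniquely decomposed as G = U^a G₁ H G₂ D^a, where a ≥ 1, G₁ is a strictly alternating bargraph, and U G₂ D is a strictly alternating bargraph; here a is the height of the lowest H step of G and the displayed H is the leftmost H step at height a. -/

import Mathlib

/-- Steps of bargraphs / Motzkin paths. -/
inductive Step where
  | U : Step
  | H : Step
  | D : Step
deriving DecidableEq

/-- Vertical displacement of a step. -/
def Step.val : Step → ℤ
  | .U => 1
  | .H => 0
  | .D => -1

/-- Mirror of a step (swap U and D). -/
def Step.mirror : Step → Step
  | .U => .D
  | .H => .H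
  | .D => .U

/-- Final height of a word. -/
def hgt (w : List Step) : ℤ := (w.map Step.val).sum

/-- A Motzkin path prefix: never goes below the x-axis. -/
def IsMotzkinPrefix (w : List Step) : Prop := ∀ p : List Step, p <+: w → 0 ≤ hgt p

/-- A Motzkin path: never below the x-axis, ends at height 0. -/
def IsMotzkin (w : List Step) : Prop := IsMotzkinPrefix w ∧ hgt w = 0

/-- No peak `UD` and no valley `DU`. -/
def Cornerless (w : List Step) : Prop :=
  ¬ [Step.U, Step.D] <:+: w ∧ ¬ [Step.D, Step.U] <:+: w

/-- A bargraph: starts at the origin, ends on the x-axis, stays strictly above the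
x-axis except at the endpoints, and has no factor `UD` or `DU`. -/
def IsBargraph (w : List Step) : Prop :=
  2 ≤ w.length ∧ hgt w = 0 ∧
    (∀ p : List Step, p <+: w → p ≠ [] → p ≠ w → 0 < hgt p) ∧ Cornerless w

/-- Semiperimeter: number of `U` steps plus number of `H` steps. -/
def semi (w : List Step) : ℕ := w.count Step.U + w.count Step.H

/-- Length of the initial run of `U` steps. -/
def leadU : List Step → ℕ
  | Step.U :: rest => leadU rest + 1
  | _ => 0

/-- Length of the initial run of `H` steps. -/
def leadH : List Step → ℕ
  | Step.H :: rest => leadH rest + 1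
  | _ => 0

/-- Length of the initial run of `D` steps. -/
def leadD : List Step → ℕ
  | Step.D :: rest => leadD rest + 1
  | _ => 0

/-- Length of the first maximal run of `D` steps (0 if none). -/
def firstDescLen : List Step → ℕ
  | [] => 0
  | Step.D :: rest => leadD rest + 1
  | _ :: rest => firstDescLen rest

/-- Number of occurrences of the two-letter factor `a b`. -/
def cnt2 (a b : Step) : List Step → ℕ
  | x :: y :: rest => (if x = a ∧ y = b then 1 else 0) + cnt2 a b (y :: rest)
  | _ => 0

/-- Heights of the columns (`H` steps), starting from a given height. -/
def colHeights : ℤ → List Step → List ℤ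
  | _, [] => []
  | h, Step.U :: rest => colHeights (h + 1) rest
  | h, Step.H :: rest => h :: colHeights h rest
  | h, Step.D :: rest => colHeights (h - 1) rest

/-- Width of the leftmost maximal horizontal segment (0 if none). -/
def lhsW : List Step → ℕ
  | [] => 0
  | Step.H :: rest => leadH rest + 1
  | _ :: rest => lhsW rest

/-- Delete `h` steps at the start of the leftmost horizontal segment. -/
def stripLeadH (h : ℕ) : List Step → List Step
  | [] => []
  | Step.H :: rest => List.drop h (Step.H :: rest)
  | s :: rest => s :: stripLeadH h rest

/-- Number of initial columns of height 1: largest `j` such that the word begins `U H^j`. -/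
def iuc : List Step → ℕ
  | Step.U :: rest => leadH rest
  | _ => 0

/-- Number of maximal horizontal segments. -/
def hsCount : List Step → ℕ
  | [] => 0
  | [Step.H] => 1
  | [_] => 0
  | a :: b :: rest => (if a = Step.H ∧ b ≠ Step.H then 1 else 0) + hsCount (b :: rest)

/-- Mirror image: reverse the word and swap `U` with `D`. -/
def mir (w : List Step) : List Step := (w.reverse).map Step.mirror

/-- Shape of strictly alternating bargraphs:
`U^{i₁} H D^{k₁} H U^{i₂} H D^{k₂} H ⋯ U^{iₘ} H D^{kₘ}` with all `iᵣ, kᵣ ≥ 1`. -/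
inductive SAShape : List Step → Prop where
  | base (i k : ℕ) : 1 ≤ i → 1 ≤ k →
      SAShape (List.replicate i Step.U ++ [Step.H] ++ List.replicate k Step.D)
  | cons (i k : ℕ) (w : List Step) : 1 ≤ i → 1 ≤ k → SAShape w →
      SAShape (List.replicate i Step.U ++ [Step.H] ++ List.replicate k Step.D ++ [Step.H] ++ w)

/-- A strictly alternating bargraph. -/
def IsStrictAlt (w : List Step) : Prop := IsBargraph w ∧ SAShape w

/-- A secondary structure on `{0, …, m-1}`: all consecutive edges are present, every
vertex has at most one non-consecutive neighbour, and there are no crossing edges. -/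
def IsSecondaryStructure {m : ℕ} (G : SimpleGraph (Fin m)) : Prop :=
  (∀ i j : Fin m, (i : ℕ) + 1 = (j : ℕ) → G.Adj i j) ∧
  (∀ i j k : Fin m, G.Adj i j → G.Adj i k →
      (i : ℕ) + 1 ≠ (j : ℕ) → (j : ℕ) + 1 ≠ (i : ℕ) →
      (i : ℕ) + 1 ≠ (k : ℕ) → (k : ℕ) + 1 ≠ (i : ℕ) → j = k) ∧
  ¬ ∃ i j k l : Fin m, (i : ℕ) < (j : ℕ) ∧ (j : ℕ) < (k : ℕ) ∧ (k : ℕ) < (l : ℕ) ∧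
      G.Adj i k ∧ G.Adj j l

/-- Generating function of bargraphs: `x` (variable 0) marks `H` steps,
`y` (variable 1) marks `U` steps. -/
noncomputable def BG : MvPowerSeries (Fin 2) ℚ :=
  fun d => (Nat.card {w : List Step //
    IsBargraph w ∧ w.count Step.H = d 0 ∧ w.count Step.U = d 1} : ℚ)

/-- Generating function of cornerless Motzkin paths. -/
noncomputable def MG : MvPowerSeries (Fin 2) ℚ :=
  fun d => (Nat.card {w : List Step //
    IsMotzkin w ∧ Cornerless w ∧ w.count Step.H = d 0 ∧ w.count Step.U = d 1} : ℚ)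

/-- Generating function of bargraphs avoiding the factor `DH`. -/
noncomputable def BDH : MvPowerSeries (Fin 2) ℚ :=
  fun d => (Nat.card {w : List Step //
    IsBargraph w ∧ ¬ [Step.D, Step.H] <:+: w ∧
      w.count Step.H = d 0 ∧ w.count Step.U = d 1} : ℚ)

/-- Generating function of bargraphs avoiding the factors `DH` and `HH`. -/
noncomputable def BDHHH : MvPowerSeries (Fin 2) ℚ :=
  fun d => (Nat.card {w : List Step //
    IsBargraph w ∧ ¬ [Step.D, Step.H] <:+: w ∧ ¬ [Step.H, Step.H] <:+: w ∧
      w.count Step.H = d 0 ∧ w.count Step.U = d 1} : ℚ)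

/-- Generating function of cornerless Motzkin path prefixes ending at height `h`. -/
noncomputable def Pgf (h : ℕ) : MvPowerSeries (Fin 2) ℚ :=
  fun d => (Nat.card {w : List Step //
    IsMotzkinPrefix w ∧ Cornerless w ∧ hgt w = (h : ℤ) ∧
      w.count Step.H = d 0 ∧ w.count Step.U = d 1} : ℚ)

/-- Decomposition `G = U^a G₁ H G₂ D^a` of a strictly alternating bargraph. -/
def SADecomp (t : ℕ × List Step × List Step) (G : List Step) : Prop :=
  1 ≤ t.1 ∧ IsStrictAlt t.2.1 ∧ IsStrictAlt (Step.U :: (t.2.2 ++ [Step.D])) ∧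
    G = List.replicate t.1 Step.U ++ t.2.1 ++ [Step.H] ++ t.2.2 ++
      List.replicate t.1 Step.D

/-! ### Auxiliary machinery for the decomposition theorem -/

lemma hgt_nil : hgt ([] : List Step) = 0 := rfl

lemma hgt_cons (s : Step) (w : List Step) : hgt (s :: w) = s.val + hgt w := by
  simp [hgt]

lemma hgt_append (u v : List Step) : hgt (u ++ v) = hgt u + hgt v := by
  simp [hgt]

lemma hgt_repU (n : ℕ) : hgt (List.replicate n Step.U) = n := by
  simp [hgt, Step.val]

lemma hgt_repD (n : ℕ) : hgt (List.replicate n Step.D) = -n := by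
  simp [hgt, Step.val]

/-- Word of a block list. -/
def tw : ℕ × ℕ → List (ℕ × ℕ) → List Step
  | (i, k), [] => List.replicate i Step.U ++ Step.H :: List.replicate k Step.D
  | (i, k), c :: cs =>
      List.replicate i Step.U ++ Step.H ::
        (List.replicate k Step.D ++ Step.H :: tw c cs)

/-- Total height change of a block list. -/
def bsum : ℕ × ℕ → List (ℕ × ℕ) → ℤ
  | (i, k), [] => (i : ℤ) - k
  | (i, k), c :: cs => (i : ℤ) - k + bsum c cs

/-- Interior valley heights of a block list started at height `h`. -/
def vals : ℤ → ℕ × ℕ → List (ℕ × ℕ) → List ℤ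
  | _, _, [] => []
  | h, (i, k), c :: cs => (h + i - k) :: vals (h + i - k) c cs

/-- Modify the `k` of the last block. -/
def mlk (f : ℕ → ℕ) : ℕ × ℕ → List (ℕ × ℕ) → (ℕ × ℕ) × List (ℕ × ℕ)
  | (i, k), [] => ((i, f k), [])
  | b, c :: cs => (b, (mlk f c cs).1 :: (mlk f c cs).2)

/-- `k` of the last block. -/
def lastK : ℕ × ℕ → List (ℕ × ℕ) → ℕ
  | (_, k), [] => k
  | _, c :: cs => lastK c cs

/-- A valid block. -/
def okB (b : ℕ × ℕ) : Prop := 1 ≤ b.1 ∧ 1 ≤ b.2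

lemma tw_ne_nil (b : ℕ × ℕ) (bs : List (ℕ × ℕ)) : tw b bs ≠ [] := by
  obtain ⟨i, k⟩ := b; cases bs <;> simp [tw]

lemma length_tw (b : ℕ × ℕ) (bs : List (ℕ × ℕ)) (hb : okB b) :
    2 ≤ (tw b bs).length := by
  obtain ⟨i, k⟩ := b; obtain ⟨h1, h2⟩ := hb
  cases bs <;> simp_all [tw] <;> omega

lemma hgt_tw (b : ℕ × ℕ) (bs : List (ℕ × ℕ)) : hgt (tw b bs) = bsum b bs := by
  induction bs generalizing b with
  | nil => obtain ⟨i, k⟩ := b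
           simp [tw, bsum, hgt_append, hgt_cons, hgt_repU, hgt_repD, Step.val]
           ring
  | cons c cs ih =>
      obtain ⟨i, k⟩ := b
      simp [tw, bsum, hgt_append, hgt_cons, hgt_repU, hgt_repD, Step.val, ih]
      ring

lemma tw_split (b c : ℕ × ℕ) (xs cs : List (ℕ × ℕ)) :
    tw b (xs ++ c :: cs) = tw b xs ++ Step.H :: tw c cs := by
  induction xs generalizing b with
  | nil => obtain ⟨i, k⟩ := b; simp [tw]
  | cons x xs ih => obtain ⟨i, k⟩ := b; simp [tw, ih]

lemma bsum_cons (b c : ℕ × ℕ) (cs : List (ℕ × ℕ)) :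
    bsum b (c :: cs) = ((b.1 : ℤ) - b.2) + bsum c cs := by
  obtain ⟨i, k⟩ := b; rfl

lemma bsum_nil (b : ℕ × ℕ) : bsum b [] = (b.1 : ℤ) - b.2 := by
  obtain ⟨i, k⟩ := b; rfl

lemma bsum_append (b c : ℕ × ℕ) (xs cs : List (ℕ × ℕ)) :
    bsum b (xs ++ c :: cs) = bsum b xs + bsum c cs := by
  induction xs generalizing b with
  | nil => rw [List.nil_append, bsum_cons, bsum_nil]
  | cons x xs ih => rw [List.cons_append, bsum_cons, ih, bsum_cons]; ring

lemma vals_cons (h : ℤ) (b c : ℕ × ℕ) (cs : List (ℕ × ℕ)) :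
    vals h b (c :: cs) = (h + b.1 - b.2) :: vals (h + b.1 - b.2) c cs := by
  obtain ⟨i, k⟩ := b; rfl

lemma vals_append (h : ℤ) (b c : ℕ × ℕ) (xs cs : List (ℕ × ℕ)) :
    vals h b (xs ++ c :: cs) =
      vals h b xs ++ (h + bsum b xs) :: vals (h + bsum b xs) c cs := by
  induction xs generalizing h b with
  | nil =>
      rw [List.nil_append, vals_cons, bsum_nil]
      norm_num [vals]
      constructor <;> ring_nf
  | cons x xs ih =>
      rw [List.cons_append, vals_cons, ih, vals_cons, bsum_cons]
      have e2 : h + b.1 - b.2 + bsum x xs = h + (b.1 - b.2 + bsum x xs) := by ring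
      rw [e2]; simp

lemma vals_shift (h d : ℤ) (b : ℕ × ℕ) (bs : List (ℕ × ℕ)) :
    vals (h + d) b bs = (vals h b bs).map (· + d) := by
  induction bs generalizing h b with
  | nil => simp [vals]
  | cons c cs ih =>
      rw [vals_cons, vals_cons, List.map_cons]
      have e : h + d + b.1 - b.2 = (h + b.1 - b.2) + d := by ring
      rw [e, ih]

lemma vals_first (h h' : ℤ) (i i' k : ℕ) (bs : List (ℕ × ℕ))
    (e : h + i = h' + i') : vals h (i, k) bs = vals h' (i', k) bs := by
  cases bs with
  | nil => simp [vals]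
  | cons c cs =>
      rw [vals_cons, vals_cons]
      have : h + (i, k).1 - (i, k).2 = h' + (i', k).1 - (i', k).2 := by
        simp only []; omega
      rw [this]

lemma bsum_first (i i' k : ℕ) (bs : List (ℕ × ℕ)) :
    bsum (i', k) bs = bsum (i, k) bs + (i' : ℤ) - i := by
  cases bs with
  | nil => rw [bsum_nil, bsum_nil]; simp; ring
  | cons c cs => rw [bsum_cons, bsum_cons]; simp; ring

lemma tw_add_split (a j k : ℕ) (bs : List (ℕ × ℕ)) :
    tw (a + j, k) bs = List.replicate a Step.U ++ tw (j, k) bs := by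
  cases bs <;> simp only [tw] <;> rw [List.replicate_add, List.append_assoc]

lemma tw_first_split (a i k : ℕ) (bs : List (ℕ × ℕ)) (hai : a ≤ i) :
    tw (i, k) bs = List.replicate a Step.U ++ tw (i - a, k) bs := by
  have e : i = a + (i - a) := by omega
  conv_lhs => rw [e]
  exact tw_add_split a (i - a) k bs

lemma tw_incFirst (i k : ℕ) (bs : List (ℕ × ℕ)) :
    tw (i + 1, k) bs = Step.U :: tw (i, k) bs := by
  cases bs <;> simp [tw, List.replicate_succ]

lemma mlk_nil (f : ℕ → ℕ) (i k : ℕ) : mlk f (i, k) [] = ((i, f k), []) := rfl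

lemma mlk_cons (f : ℕ → ℕ) (b c : ℕ × ℕ) (cs : List (ℕ × ℕ)) :
    mlk f b (c :: cs) = (b, (mlk f c cs).1 :: (mlk f c cs).2) := by
  obtain ⟨i, k⟩ := b; rfl

lemma mlk_fst (f : ℕ → ℕ) (b : ℕ × ℕ) (bs : List (ℕ × ℕ)) :
    (mlk f b bs).1.1 = b.1 := by
  obtain ⟨i, k⟩ := b; cases bs <;> rfl

lemma tw_mlk_add (a : ℕ) (b : ℕ × ℕ) (bs : List (ℕ × ℕ)) :
    tw (mlk (· + a) b bs).1 (mlk (· + a) b bs).2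
      = tw b bs ++ List.replicate a Step.D := by
  induction bs generalizing b with
  | nil =>
      obtain ⟨i, k⟩ := b
      simp only [mlk_nil, tw, List.replicate_add, List.append_assoc,
        List.cons_append]
  | cons c cs ih =>
      obtain ⟨i, k⟩ := b
      simp only [mlk_cons, tw, ih, List.append_assoc, List.cons_append]

lemma vals_mlk (f : ℕ → ℕ) (h : ℤ) (b : ℕ × ℕ) (bs : List (ℕ × ℕ)) :
    vals h (mlk f b bs).1 (mlk f b bs).2 = vals h b bs := by
  induction bs generalizing h b with
  | nil => obtain ⟨i, k⟩ := b; simp [mlk_nil, vals]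
  | cons c cs ih =>
      obtain ⟨i, k⟩ := b
      rw [mlk_cons, vals_cons, vals_cons, ih]

lemma bsum_mlk_add (a : ℕ) (b : ℕ × ℕ) (bs : List (ℕ × ℕ)) :
    bsum (mlk (· + a) b bs).1 (mlk (· + a) b bs).2 = bsum b bs - a := by
  induction bs generalizing b with
  | nil => obtain ⟨i, k⟩ := b; simp [mlk_nil, bsum]; ring
  | cons c cs ih =>
      obtain ⟨i, k⟩ := b
      rw [mlk_cons, bsum_cons, bsum_cons, ih]; ring

lemma bsum_mlk_sub (a : ℕ) (b : ℕ × ℕ) (bs : List (ℕ × ℕ))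
    (ha : a ≤ lastK b bs) :
    bsum (mlk (· - a) b bs).1 (mlk (· - a) b bs).2 = bsum b bs + a := by
  induction bs generalizing b with
  | nil =>
      obtain ⟨i, k⟩ := b
      have hk : a ≤ k := ha
      simp [mlk_nil, bsum]
      omega
  | cons c cs ih =>
      obtain ⟨i, k⟩ := b
      rw [mlk_cons, bsum_cons, bsum_cons, ih c ha]; ring

lemma mlk_cancel (a : ℕ) (b : ℕ × ℕ) (bs : List (ℕ × ℕ))
    (ha : a ≤ lastK b bs) :
    (mlk (· + a) (mlk (· - a) b bs).1 (mlk (· - a) b bs).2) = (b, bs) := by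
  induction bs generalizing b with
  | nil =>
      obtain ⟨i, k⟩ := b
      have hk : a ≤ k := ha
      simp [mlk_nil]
      omega
  | cons c cs ih =>
      obtain ⟨i, k⟩ := b
      have h2 := ih c ha
      simp [mlk_cons, h2]

lemma mlk_ok (f : ℕ → ℕ) (b : ℕ × ℕ) (bs : List (ℕ × ℕ))
    (hb : okB b) (hbs : ∀ c ∈ bs, okB c) (hf : 1 ≤ f (lastK b bs)) :
    okB (mlk f b bs).1 ∧ ∀ c ∈ (mlk f b bs).2, okB c := by
  induction bs generalizing b with
  | nil =>
      obtain ⟨i, k⟩ := b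
      exact ⟨⟨hb.1, hf⟩, by simp [mlk_nil]⟩
  | cons c cs ih =>
      rw [mlk_cons]
      obtain ⟨h1, h2⟩ := ih c (hbs c (by simp)) (fun d hd => hbs d (by simp [hd])) hf
      exact ⟨hb, by
        intro d hd
        simp only [List.mem_cons] at hd
        rcases hd with rfl | hd
        · exact h1
        · exact h2 d hd⟩

lemma SAShape_tw (b : ℕ × ℕ) (bs : List (ℕ × ℕ)) (hb : okB b)
    (hbs : ∀ c ∈ bs, okB c) : SAShape (tw b bs) := by
  induction bs generalizing b with
  | nil =>
      obtain ⟨i, k⟩ := b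
      have := SAShape.base i k hb.1 hb.2
      simpa [tw, List.append_assoc] using this
  | cons c cs ih =>
      obtain ⟨i, k⟩ := b
      have h := SAShape.cons i k (tw c cs) hb.1 hb.2
        (ih c (hbs c (by simp)) (fun d hd => hbs d (by simp [hd])))
      simpa [tw, List.append_assoc] using h

lemma tw_blocks {w : List Step} (h : SAShape w) :
    ∃ b bs, okB b ∧ (∀ c ∈ bs, okB c) ∧ w = tw b bs := by
  induction h with
  | base i k hi hk =>
      exact ⟨(i, k), [], ⟨hi, hk⟩, by simp, by simp [tw, List.append_assoc]⟩
  | cons i k w hi hk hw ih =>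
      obtain ⟨b, bs, hb, hbs, rfl⟩ := ih
      refine ⟨(i, k), b :: bs, ⟨hi, hk⟩, ?_, by simp [tw, List.append_assoc]⟩
      intro c hc
      simp only [List.mem_cons] at hc
      rcases hc with rfl | hc
      · exact hb
      · exact hbs c hc

/-- The non-corner relation. -/
def Rnc (x y : Step) : Prop :=
  ¬(x = Step.U ∧ y = Step.D) ∧ ¬(x = Step.D ∧ y = Step.U)

lemma chain'_replicate_R (n : ℕ) (a : Step) (h : Rnc a a) :
    List.Chain' Rnc (List.replicate n a) := by
  induction n with
  | zero => exact List.isChain_nil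
  | succ m ih =>
      rw [List.replicate_succ]
      cases m with
      | zero => exact List.isChain_singleton a
      | succ m' =>
          rw [List.replicate_succ]
          exact List.IsChain.cons_cons h (by rwa [← List.replicate_succ])

lemma Rnc_right_H (x : Step) : Rnc x Step.H := by cases x <;> simp [Rnc]

lemma Rnc_left_H (y : Step) : Rnc Step.H y := by cases y <;> simp [Rnc]

lemma chain'_tw (b : ℕ × ℕ) (bs : List (ℕ × ℕ)) :
    List.Chain' Rnc (tw b bs) := by
  induction bs generalizing b with
  | nil =>
      obtain ⟨i, k⟩ := b
      rw [tw]; show List.IsChain Rnc _; rw [List.isChain_append]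
      refine ⟨chain'_replicate_R i Step.U (by simp [Rnc]), ?_, ?_⟩
      · rw [List.isChain_cons]
        exact ⟨fun b _ => Rnc_left_H b, chain'_replicate_R k Step.D (by simp [Rnc])⟩
      · intro x hx y hy
        simp at hy
        subst hy
        exact Rnc_right_H x
  | cons c cs ih =>
      obtain ⟨i, k⟩ := b
      rw [tw]; show List.IsChain Rnc _; rw [List.isChain_append]
      refine ⟨chain'_replicate_R i Step.U (by simp [Rnc]), ?_, ?_⟩
      · rw [List.isChain_cons]
        refine ⟨fun b _ => Rnc_left_H b, ?_⟩
        rw [List.isChain_append]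
        refine ⟨chain'_replicate_R k Step.D (by simp [Rnc]), ?_, ?_⟩
        · rw [List.isChain_cons]
          exact ⟨fun b _ => Rnc_left_H b, ih c⟩
        · intro x hx y hy
          simp at hy
          subst hy
          exact Rnc_right_H x
      · intro x hx y hy
        simp at hy
        subst hy
        exact Rnc_right_H x

lemma cornerless_tw (b : ℕ × ℕ) (bs : List (ℕ × ℕ)) : Cornerless (tw b bs) := by
  have hc := chain'_tw b bs
  constructor
  · intro hinf
    have := hc.infix hinf
    rw [List.isChain_cons_cons] at this
    exact this.1.1 ⟨rfl, rfl⟩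
  · intro hinf
    have := hc.infix hinf
    rw [List.isChain_cons_cons] at this
    exact this.1.2 ⟨rfl, rfl⟩

lemma countH_tw_nil (b : ℕ × ℕ) : (tw b []).count Step.H = 1 := by
  obtain ⟨i, k⟩ := b
  simp [tw, List.count_append, List.count_replicate, List.count_cons]

lemma prefix_append_cases {α : Type*} {p l m : List α} (h : p <+: l ++ m) :
    p <+: l ∨ ∃ q, q <+: m ∧ p = l ++ q := by
  by_cases hl : p.length ≤ l.length
  · exact Or.inl (List.prefix_of_prefix_length_le h (l.prefix_append m) hl)
  · right
    have h2 : l <+: p :=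
      List.prefix_of_prefix_length_le (l.prefix_append m) h (by omega)
    obtain ⟨q, rfl⟩ := h2
    obtain ⟨r, hr⟩ := h
    rw [List.append_assoc] at hr
    have := List.append_cancel_left hr
    exact ⟨q, ⟨r, this⟩, rfl⟩

lemma prefix_replicate {α : Type*} {p : List α} {n : ℕ} {x : α}
    (h : p <+: List.replicate n x) :
    p = List.replicate p.length x ∧ p.length ≤ n := by
  have hl : p.length ≤ n := by simpa using h.length_le
  have := List.prefix_iff_eq_take.1 h
  rw [List.take_replicate] at this
  rw [min_eq_left hl] at this
  exact ⟨this, hl⟩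

lemma prefix_cons_cases {α : Type*} {p : List α} {x : α} {l : List α}
    (h : p <+: x :: l) : p = [] ∨ ∃ q, q <+: l ∧ p = x :: q := by
  cases p with
  | nil => exact Or.inl rfl
  | cons y q =>
      rw [List.cons_prefix_cons] at h
      exact Or.inr ⟨q, h.2, by rw [h.1]⟩

/-- Prefix positivity of valid block words. -/
lemma pfx_pos : ∀ (bs : List (ℕ × ℕ)) (b : ℕ × ℕ) (h : ℤ), okB b →
    (∀ c ∈ bs, okB c) → 0 ≤ h → (∀ v ∈ vals h b bs, 0 < v) →
    0 ≤ h + bsum b bs →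
    ∀ p, p <+: tw b bs → p ≠ [] → p ≠ tw b bs → 0 < h + hgt p := by
  intro bs
  induction bs with
  | nil =>
      rintro ⟨i, k⟩ h ⟨hi, hk⟩ - h0 - hend p hp hne hnev
      rw [tw] at hp
      rcases prefix_append_cases hp with hp | ⟨q, hq, rfl⟩
      · obtain ⟨hp1, hp2⟩ := prefix_replicate hp
        rw [hp1, hgt_repU]
        have : p.length ≠ 0 := by simpa using fun h => hne (by rw [hp1, h]; rfl)
        have : 1 ≤ p.length := by omega
        have : (1 : ℤ) ≤ p.length := by exact_mod_cast this
        omega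
      · rcases prefix_cons_cases hq with rfl | ⟨q', hq', rfl⟩
        · rw [List.append_nil, hgt_repU]
          have : (1 : ℤ) ≤ i := by exact_mod_cast hi
          omega
        · obtain ⟨hq1, hq2⟩ := prefix_replicate hq'
          rw [hq1] at hnev ⊢
          have hslt : q'.length < k := by
            rcases Nat.lt_or_ge q'.length k with h' | h'
            · exact h'
            · exfalso
              apply hnev
              rw [tw]
              have hqk : q'.length = k := by omega
              rw [hqk]
          rw [hgt_append, hgt_repU, hgt_cons, hgt_repD]
          rw [bsum_nil] at hend
          simp only [Step.val]
          have : (q'.length : ℤ) < k := by exact_mod_cast hslt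
          simp at hend ⊢
          omega
  | cons c cs ih =>
      rintro ⟨i, k⟩ h ⟨hi, hk⟩ hoks h0 hvals hend p hp hne hnev
      have hv1 : 0 < h + i - k := by
        apply hvals
        rw [vals_cons]
        exact List.mem_cons_self
      rw [tw] at hp
      rcases prefix_append_cases hp with hp | ⟨q, hq, rfl⟩
      · obtain ⟨hp1, hp2⟩ := prefix_replicate hp
        rw [hp1, hgt_repU]
        have h1 : p.length ≠ 0 := by simpa using fun h => hne (by rw [hp1, h]; rfl)
        have h2 : 1 ≤ p.length := by omega
        have : (1 : ℤ) ≤ p.length := by exact_mod_cast h2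
        omega
      · rcases prefix_cons_cases hq with rfl | ⟨q', hq', rfl⟩
        · rw [List.append_nil, hgt_repU]
          have : (1 : ℤ) ≤ i := by exact_mod_cast hi
          omega
        · have hi' : (1 : ℤ) ≤ i := by exact_mod_cast hi
          rcases prefix_append_cases hq' with hq2 | ⟨r, hr, rfl⟩
          · obtain ⟨hr1, hr2⟩ := prefix_replicate hq2
            rw [hr1, hgt_append, hgt_repU, hgt_cons, hgt_repD]
            simp only [Step.val]
            have : (q'.length : ℤ) ≤ k := by exact_mod_cast hr2
            omega
          · rcases prefix_cons_cases hr with rfl | ⟨r', hr', rfl⟩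
            · rw [List.append_nil, hgt_append, hgt_repU, hgt_cons, hgt_repD]
              simp only [Step.val]
              omega
            · by_cases hrfull : r' = tw c cs
              · exfalso
                apply hnev
                rw [hrfull, tw]
              · have hrne : r' = [] ∨ r' ≠ [] := em _
                have key : 0 < (h + i - k) + hgt r' := by
                  rcases hrne with rfl | hrne
                  · rw [hgt_nil]; omega
                  · apply ih c (h + i - k) (hoks c (by simp))
                      (fun d hd => hoks d (by simp [hd])) (le_of_lt hv1)
                      (fun v hv => hvals v (by rw [vals_cons]; exact List.mem_cons_of_mem _ hv))
                      ?_ r' hr' hrne hrfull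
                    rw [bsum_cons] at hend
                    have : h + i - k + bsum c cs = h + (((i, k).1 : ℤ) - (i, k).2 + bsum c cs) := by
                      simp; ring
                    rw [this]
                    exact hend
                rw [hgt_append, hgt_repU, hgt_cons, hgt_append, hgt_repD, hgt_cons]
                simp only [Step.val]
                omega

lemma vals_mem_split {v : ℤ} : ∀ (bs : List (ℕ × ℕ)) (b : ℕ × ℕ) (h : ℤ),
    v ∈ vals h b bs → ∃ xs c cs, bs = xs ++ c :: cs ∧ v = h + bsum b xs := by
  intro bs
  induction bs with
  | nil => intro b h hv; simp [vals] at hv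
  | cons c cs ih =>
      intro b h hv
      rw [vals_cons] at hv
      rcases List.mem_cons.1 hv with rfl | hv
      · exact ⟨[], c, cs, rfl, by rw [bsum_nil]; ring⟩
      · obtain ⟨xs, c', cs', rfl, hv'⟩ := ih c _ hv
        exact ⟨c :: xs, c', cs', rfl, by rw [bsum_cons, hv']; ring⟩

/-- Forward: interior valleys of a strictly-positive block word are positive. -/
lemma vals_pos_of_bargraph (b : ℕ × ℕ) (bs : List (ℕ × ℕ))
    (hbg : IsBargraph (tw b bs)) : ∀ v ∈ vals 0 b bs, 0 < v := by
  intro v hv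
  obtain ⟨xs, c, cs, rfl, hveq⟩ := vals_mem_split bs b 0 hv
  have hpre : tw b xs <+: tw b (xs ++ c :: cs) := by
    rw [tw_split]
    exact ⟨Step.H :: tw c cs, rfl⟩
  have hlen : (tw b xs).length < (tw b (xs ++ c :: cs)).length := by
    rw [tw_split, List.length_append, List.length_cons]
    have := List.length_pos_iff.2 (tw_ne_nil c cs)
    omega
  have := hbg.2.2.1 (tw b xs) hpre (tw_ne_nil b xs)
    (fun h => by rw [h] at hlen; omega)
  rw [hgt_tw] at this
  rw [hveq]
  simpa using this

/-- Backward: a valid block word with positive valleys and zero sum is a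
strictly alternating bargraph. -/
lemma isStrictAlt_tw (b : ℕ × ℕ) (bs : List (ℕ × ℕ)) (hb : okB b)
    (hbs : ∀ c ∈ bs, okB c) (hvals : ∀ v ∈ vals 0 b bs, 0 < v)
    (hsum : bsum b bs = 0) : IsStrictAlt (tw b bs) := by
  refine ⟨⟨length_tw b bs hb, by rw [hgt_tw]; exact hsum, ?_, cornerless_tw b bs⟩,
    SAShape_tw b bs hb hbs⟩
  intro p hp hne hnev
  have := pfx_pos bs b 0 hb hbs le_rfl hvals (by rw [hsum]; norm_num) p hp hne hnev
  simpa using this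

/-- Leftmost minimum of the valley list. -/
lemma findmin : ∀ (bs : List (ℕ × ℕ)) (b : ℕ × ℕ) (h : ℤ), bs ≠ [] →
    ∃ pre c suf, bs = pre ++ c :: suf ∧
      (∀ v ∈ vals h b bs, h + bsum b pre ≤ v) ∧
      (∀ v ∈ vals h b pre, h + bsum b pre < v) := by
  intro bs
  induction bs with
  | nil => intro b h hne; exact absurd rfl hne
  | cons c0 cs0 ih =>
      intro b h _
      cases cs0 with
      | nil =>
          refine ⟨[], c0, [], rfl, ?_, by simp [vals]⟩
          intro v hv
          rw [vals_cons] at hv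
          simp [vals] at hv
          rw [hv, bsum_nil]
          omega
      | cons c1 cs1 =>
          obtain ⟨pre', c', suf', hsplit, hb1, hb2⟩ :=
            ih c0 (h + b.1 - b.2) (by simp)
          by_cases hcmp : h + b.1 - b.2 ≤ h + b.1 - b.2 + bsum c0 pre'
          · refine ⟨[], c0, c1 :: cs1, rfl, ?_, by simp [vals]⟩
            intro v hv
            rw [vals_cons] at hv
            rw [bsum_nil]
            rcases List.mem_cons.1 hv with rfl | hv
            · omega
            · have := hb1 v hv
              calc h + ((b.1 : ℤ) - b.2) = h + b.1 - b.2 := by ring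
                _ ≤ h + b.1 - b.2 + bsum c0 pre' := hcmp
                _ ≤ v := this
          · push_neg at hcmp
            refine ⟨c0 :: pre', c', suf', by rw [hsplit]; rfl, ?_, ?_⟩
            · intro v hv
              rw [vals_cons] at hv
              have he : h + bsum b (c0 :: pre') = h + b.1 - b.2 + bsum c0 pre' := by
                rw [bsum_cons]; ring
              rw [he]
              rcases List.mem_cons.1 hv with rfl | hv
              · exact le_of_lt hcmp
              · exact hb1 v hv
            · intro v hv
              rw [vals_cons] at hv
              have he : h + bsum b (c0 :: pre') = h + b.1 - b.2 + bsum c0 pre' := by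
                rw [bsum_cons]; ring
              rw [he]
              rcases List.mem_cons.1 hv with rfl | hv
              · exact hcmp
              · exact hb2 v hv

/-- The last descent is longer than the global minimum. -/
lemma lastK_ge (a : ℤ) : ∀ (suf : List (ℕ × ℕ)) (c : ℕ × ℕ) (h : ℤ),
    okB c → (∀ d ∈ suf, okB d) → (∀ v ∈ vals h c suf, a ≤ v) → a ≤ h →
    h + bsum c suf = 0 → a + 1 ≤ (lastK c suf : ℤ) := by
  intro suf
  induction suf with
  | nil =>
      rintro ⟨i, k⟩ h ⟨hi, hk⟩ - - hah hend
      rw [bsum_nil] at hend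
      have : (1 : ℤ) ≤ i := by exact_mod_cast hi
      have : lastK (i, k) [] = k := rfl
      rw [this]
      simp at hend
      omega
  | cons d ds ih =>
      rintro ⟨i, k⟩ h hok hoks hvals hah hend
      have hv1 : a ≤ h + i - k := by
        apply hvals
        rw [vals_cons]
        exact List.mem_cons_self
      have : lastK (i, k) (d :: ds) = lastK d ds := rfl
      rw [this]
      apply ih d (h + i - k) (hoks d (by simp))
        (fun e he => hoks e (by simp [he]))
        (fun v hv => hvals v (by rw [vals_cons]; exact List.mem_cons_of_mem _ hv))
        hv1
      rw [bsum_cons] at hend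
      have : h + ↑i - ↑k + bsum d ds = h + (((i,k).1 : ℤ) - (i,k).2 + bsum d ds) := by
        simp; ring
      rw [this]
      exact hend

lemma ch_nil (h : ℤ) : colHeights h [] = [] := rfl
lemma ch_U (h : ℤ) (w : List Step) :
    colHeights h (Step.U :: w) = colHeights (h + 1) w := rfl
lemma ch_H (h : ℤ) (w : List Step) :
    colHeights h (Step.H :: w) = h :: colHeights h w := rfl
lemma ch_D (h : ℤ) (w : List Step) :
    colHeights h (Step.D :: w) = colHeights (h - 1) w := rfl

lemma ch_append : ∀ (u v : List Step) (h : ℤ),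
    colHeights h (u ++ v) = colHeights h u ++ colHeights (h + hgt u) v := by
  intro u
  induction u with
  | nil => intro v h; simp [colHeights, hgt]
  | cons x u ih =>
      intro v h
      cases x
      · rw [List.cons_append, ch_U, ch_U, ih, hgt_cons]
        congr 2
        simp [Step.val]
        ring
      · rw [List.cons_append, ch_H, ch_H, ih, hgt_cons]
        congr 2
        simp [Step.val]
      · rw [List.cons_append, ch_D, ch_D, ih, hgt_cons]
        congr 2
        simp [Step.val]
        ring

lemma ch_repU : ∀ (n : ℕ) (h : ℤ), colHeights h (List.replicate n Step.U) = [] := by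
  intro n
  induction n with
  | zero => intro h; rfl
  | succ m ih => intro h; rw [List.replicate_succ, ch_U]; exact ih _

lemma ch_repD : ∀ (n : ℕ) (h : ℤ), colHeights h (List.replicate n Step.D) = [] := by
  intro n
  induction n with
  | zero => intro h; rfl
  | succ m ih => intro h; rw [List.replicate_succ, ch_D]; exact ih _

lemma ch_shift : ∀ (w : List Step) (h d : ℤ),
    colHeights (h + d) w = (colHeights h w).map (· + d) := by
  intro w
  induction w with
  | nil => intro h d; rfl
  | cons x w ih =>
      intro h d
      cases x
      · rw [ch_U, ch_U, show h + d + 1 = (h + 1) + d by ring, ih]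
      · rw [ch_H, ch_H, List.map_cons, ih]
      · rw [ch_D, ch_D, show h + d - 1 = (h - 1) + d by ring, ih]

lemma ch_mem_bwd (h : ℤ) (p s : List Step) :
    (h + hgt p) ∈ colHeights h (p ++ Step.H :: s) := by
  rw [ch_append, ch_H]
  exact List.mem_append_right _ (List.mem_cons_self)

lemma ch_mem_fwd : ∀ (w : List Step) (h c : ℤ), c ∈ colHeights h w →
    ∃ p s, w = p ++ Step.H :: s ∧ c = h + hgt p := by
  intro w
  induction w with
  | nil => intro h c hc; simp [colHeights] at hc
  | cons x w ih =>
      intro h c hc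
      cases x
      · rw [ch_U] at hc
        obtain ⟨p, s, rfl, rfl⟩ := ih _ _ hc
        exact ⟨Step.U :: p, s, rfl, by rw [hgt_cons]; simp [Step.val]; ring⟩
      · rw [ch_H] at hc
        rcases List.mem_cons.1 hc with rfl | hc
        · exact ⟨[], w, rfl, by simp [hgt]⟩
        · obtain ⟨p, s, rfl, rfl⟩ := ih _ _ hc
          exact ⟨Step.H :: p, s, rfl, by rw [hgt_cons]; simp [Step.val]⟩
      · rw [ch_D] at hc
        obtain ⟨p, s, rfl, rfl⟩ := ih _ _ hc
        exact ⟨Step.D :: p, s, rfl, by rw [hgt_cons]; simp [Step.val]; ring⟩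

lemma SA_head {w : List Step} (h : SAShape w) : ∃ r, w = Step.U :: r := by
  cases h with
  | base i k hi hk =>
      cases i with
      | zero => omega
      | succ n =>
          exact ⟨List.replicate n Step.U ++ [Step.H] ++ List.replicate k Step.D,
            by rw [List.replicate_succ]; simp [List.append_assoc]⟩
  | cons i k w hi hk hw =>
      cases i with
      | zero => omega
      | succ n =>
          exact ⟨List.replicate n Step.U ++ [Step.H] ++ List.replicate k Step.D
              ++ [Step.H] ++ w,
            by rw [List.replicate_succ]; simp [List.append_assoc]⟩

lemma hgt_G2_zero {G₂ : List Step}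
    (h : IsStrictAlt (Step.U :: (G₂ ++ [Step.D]))) : hgt G₂ = 0 := by
  have := h.1.2.1
  rw [hgt_cons, hgt_append, hgt_cons, hgt_nil] at this
  simp [Step.val] at this
  omega

lemma colG1_pos {G₁ : List Step} (h : IsStrictAlt G₁) :
    ∀ c ∈ colHeights 0 G₁, 0 < c := by
  intro c hc
  obtain ⟨p, s, hps, rfl⟩ := ch_mem_fwd G₁ 0 c hc
  rcases em (p = []) with rfl | hne
  · exfalso
    obtain ⟨r, hr⟩ := SA_head h.2
    rw [hps] at hr
    simp at hr
  · have hplt : p.length < G₁.length := by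
      rw [hps, List.length_append, List.length_cons]
      omega
    have := h.1.2.2.1 p (by rw [hps]; exact ⟨_, rfl⟩) hne
      (fun he => by rw [he] at hplt; omega)
    simpa using this

lemma colG2_nonneg {G₂ : List Step}
    (h : IsStrictAlt (Step.U :: (G₂ ++ [Step.D]))) :
    ∀ c ∈ colHeights 0 G₂, 0 ≤ c := by
  intro c hc
  obtain ⟨p, s, hps, rfl⟩ := ch_mem_fwd G₂ 0 c hc
  have hfull : Step.U :: (G₂ ++ [Step.D])
      = (Step.U :: p) ++ Step.H :: (s ++ [Step.D]) := by
    rw [hps]; simp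
  have hlen : (Step.U :: p).length < (Step.U :: (G₂ ++ [Step.D])).length := by
    rw [hfull]; simp
  have hpos := h.1.2.2.1 (Step.U :: p) ⟨_, hfull.symm⟩ (by simp)
    (fun he => by rw [he] at hlen; omega)
  rw [hgt_cons] at hpos
  simp [Step.val] at hpos
  omega

/-- The three "moreover" bullets hold for any decomposition. -/
lemma decomp_bullets {t : ℕ × List Step × List Step} {G : List Step}
    (hd : SADecomp t G) :
    ((t.1 : ℤ) ∈ colHeights 0 G) ∧ (∀ c ∈ colHeights 0 G, (t.1 : ℤ) ≤ c) ∧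
    (∀ c ∈ colHeights 0 (List.replicate t.1 Step.U ++ t.2.1), (t.1 : ℤ) < c) := by
  obtain ⟨a, G₁, G₂⟩ := t
  obtain ⟨ha, hG1, hG2, hGeq⟩ := hd
  simp only at ha hG1 hG2 hGeq ⊢
  have hgtG1 : hgt G₁ = 0 := hG1.1.2.1
  have hgtG2 : hgt G₂ = 0 := hgt_G2_zero hG2
  have hshift1 : colHeights (a : ℤ) G₁ = (colHeights 0 G₁).map (· + (a : ℤ)) := by
    have := ch_shift G₁ 0 (a : ℤ)
    simpa using this
  have hshift2 : colHeights (a : ℤ) G₂ = (colHeights 0 G₂).map (· + (a : ℤ)) := by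
    have := ch_shift G₂ 0 (a : ℤ)
    simpa using this
  have hpre : colHeights 0 (List.replicate a Step.U ++ G₁)
      = colHeights (a : ℤ) G₁ := by
    rw [ch_append, ch_repU, hgt_repU]
    simp
  have hCH : colHeights 0 G
      = colHeights (a : ℤ) G₁ ++ (a : ℤ) :: colHeights (a : ℤ) G₂ := by
    rw [hGeq]
    simp only [ch_append, hgt_append, hgt_repU, hgtG1, hgtG2, ch_repU, ch_repD]
    simp [colHeights, hgt, Step.val, hgtG2]
  refine ⟨?_, ?_, ?_⟩
  · rw [hCH]
    exact List.mem_append_right _ (List.mem_cons_self)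
  · intro c hc
    rw [hCH] at hc
    rcases List.mem_append.1 hc with hc | hc
    · rw [hshift1] at hc
      obtain ⟨x, hx, rfl⟩ := List.mem_map.1 hc
      have := colG1_pos hG1 x hx
      omega
    · rcases List.mem_cons.1 hc with rfl | hc
      · exact le_rfl
      · rw [hshift2] at hc
        obtain ⟨x, hx, rfl⟩ := List.mem_map.1 hc
        have := colG2_nonneg hG2 x hx
        omega
  · intro c hc
    rw [hpre, hshift1] at hc
    obtain ⟨x, hx, rfl⟩ := List.mem_map.1 hc
    have := colG1_pos hG1 x hx
    omega

lemma decomp_eq_aux {t t' : ℕ × List Step × List Step} {G : List Step}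
    (hd : SADecomp t G) (hd' : SADecomp t' G)
    (hlen : (List.replicate t.1 Step.U ++ t.2.1).length
      ≤ (List.replicate t'.1 Step.U ++ t'.2.1).length) : t = t' := by
  obtain ⟨a, G₁, G₂⟩ := t
  obtain ⟨a', G₁', G₂'⟩ := t'
  have hb := decomp_bullets hd
  have hb' := decomp_bullets hd'
  obtain ⟨ha, hG1, hG2, hGeq⟩ := hd
  obtain ⟨ha', hG1', hG2', hGeq'⟩ := hd'
  simp only at ha hG1 hG2 hGeq ha' hG1' hG2' hGeq' hlen hb hb' ⊢
  have hG : G = (List.replicate a Step.U ++ G₁)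
      ++ Step.H :: (G₂ ++ List.replicate a Step.D) := by
    rw [hGeq]; simp [List.append_assoc]
  have hG' : G = (List.replicate a' Step.U ++ G₁')
      ++ Step.H :: (G₂' ++ List.replicate a' Step.D) := by
    rw [hGeq']; simp [List.append_assoc]
  have hPpre : (List.replicate a Step.U ++ G₁) <+: G := ⟨_, hG.symm⟩
  have hPpre' : (List.replicate a' Step.U ++ G₁') <+: G := ⟨_, hG'.symm⟩
  have hPP' := List.prefix_of_prefix_length_le hPpre hPpre' hlen
  obtain ⟨r, hr⟩ := hPP'
  have hgtP : hgt (List.replicate a Step.U ++ G₁) = (a : ℤ) := by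
    rw [hgt_append, hgt_repU, hG1.1.2.1]; ring
  have hgtP' : hgt (List.replicate a' Step.U ++ G₁') = (a' : ℤ) := by
    rw [hgt_append, hgt_repU, hG1'.1.2.1]; ring
  cases r with
  | nil =>
      rw [List.append_nil] at hr
      have haa : a = a' := by
        have : (a : ℤ) = (a' : ℤ) := by rw [← hgtP, ← hgtP', hr]
        exact_mod_cast this
      subst haa
      have hG1eq : G₁ = G₁' := List.append_cancel_left hr
      have h5 := hG.symm.trans hG'
      rw [← hr] at h5
      have h6 := List.append_cancel_left h5
      have h7 : G₂ ++ List.replicate a Step.D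
          = G₂' ++ List.replicate a Step.D := by
        injection h6
      have hG2eq : G₂ = G₂' := List.append_cancel_right h7
      rw [hG1eq, hG2eq]
  | cons x r' =>
      have h2 := hG.symm.trans hG'
      rw [← hr] at h2
      simp only [List.append_assoc, List.cons_append] at h2
      have h3 := List.append_cancel_left (List.append_cancel_left h2)
      obtain ⟨hx, -⟩ := List.cons_eq_cons.1 h3
      subst hx
      have h4 := ch_mem_bwd 0 (List.replicate a Step.U ++ G₁) r'
      rw [hgtP, hr] at h4
      simp only [zero_add] at h4
      have h5 := hb'.2.2 _ h4
      have h6 := hb.2.1 _ hb'.1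
      omega

lemma decomp_exists {G : List Step} (hG : IsStrictAlt G)
    (hH : 2 ≤ G.count Step.H) : ∃ t, SADecomp t G := by
  obtain ⟨b, bs, hb, hbs, rfl⟩ := tw_blocks hG.2
  obtain ⟨i1, k1⟩ := b
  have hbsne : bs ≠ [] := by
    rintro rfl
    rw [countH_tw_nil] at hH
    omega
  have hvals := vals_pos_of_bargraph (i1, k1) bs hG.1
  have hsum : bsum (i1, k1) bs = 0 := by rw [← hgt_tw]; exact hG.1.2.1
  obtain ⟨pre, c, suf, hsplit, hmin, hstrict⟩ := findmin bs (i1, k1) 0 hbsne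
  simp only [zero_add] at hmin hstrict
  set aZ : ℤ := bsum (i1, k1) pre with haZdef
  have hvapp : vals 0 (i1, k1) bs
      = vals 0 (i1, k1) pre ++ aZ :: vals aZ c suf := by
    rw [hsplit, vals_append]
    simp [haZdef]
  have hmemv : aZ ∈ vals 0 (i1, k1) bs := by
    rw [hvapp]
    exact List.mem_append_right _ (List.mem_cons_self)
  have haZpos : 0 < aZ := hvals _ hmemv
  set a : ℕ := aZ.toNat with hadef
  have haZ : (a : ℤ) = aZ := Int.toNat_of_nonneg (le_of_lt haZpos)
  have ha1 : 1 ≤ a := by omega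
  clear_value a aZ
  -- a is smaller than the first ascent
  have hfv : ((i1 : ℤ) - k1) ∈ vals 0 (i1, k1) bs := by
    obtain ⟨c0, cs0, rfl⟩ := List.exists_cons_of_ne_nil hbsne
    rw [vals_cons]
    have : (0 : ℤ) + (i1, k1).1 - (i1, k1).2 = (i1 : ℤ) - k1 := by simp
    rw [this]
    exact List.mem_cons_self
  have hai1 : a + 1 ≤ i1 := by
    have h1 := hmin _ hfv
    have h2 : (1 : ℤ) ≤ k1 := by exact_mod_cast hb.2
    have h3 : aZ ≤ (i1 : ℤ) - k1 := h1
    omega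
  -- suffix facts
  have hsufvals : ∀ v ∈ vals aZ c suf, aZ ≤ v := by
    intro v hv
    apply hmin
    rw [hvapp]
    exact List.mem_append_right _ (List.mem_cons_of_mem _ hv)
  have hsufsum : aZ + bsum c suf = 0 := by
    rw [hsplit, bsum_append] at hsum
    omega
  have hokc : okB c := hbs c (by rw [hsplit]; exact List.mem_append_right _ (List.mem_cons_self))
  have hoksuf : ∀ d ∈ suf, okB d := fun d hd =>
    hbs d (by rw [hsplit]; exact List.mem_append_right _ (List.mem_cons_of_mem _ hd))
  have hokpre : ∀ d ∈ pre, okB d := fun d hd =>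
    hbs d (by rw [hsplit]; exact List.mem_append_left _ hd)
  have hlastKZ : (aZ : ℤ) + 1 ≤ (lastK c suf : ℤ) :=
    lastK_ge aZ suf c aZ hokc hoksuf hsufvals le_rfl hsufsum
  have hle : a + 1 ≤ lastK c suf := by omega
  have hle' : a ≤ lastK c suf := by omega
  -- the three pieces
  refine ⟨(a, tw (i1 - a, k1) pre,
    tw (mlk (· - a) c suf).1 (mlk (· - a) c suf).2), ha1, ?_, ?_, ?_⟩
  · -- G₁ is strictly alternating
    apply isStrictAlt_tw
    · exact ⟨by simp; omega, hb.2⟩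
    · exact hokpre
    · intro v hv
      rw [vals_first 0 (-aZ) (i1 - a) i1 k1 pre
        (by rw [Nat.cast_sub (by omega)]; omega)] at hv
      rw [show (-aZ : ℤ) = 0 + (-aZ) by ring, vals_shift] at hv
      obtain ⟨x, hx, rfl⟩ := List.mem_map.1 hv
      have := hstrict x hx
      omega
    · rw [bsum_first i1 (i1 - a) k1 pre]
      rw [Nat.cast_sub (by omega)]
      omega
  · -- U G₂ D is strictly alternating
    have heq : Step.U :: (tw (mlk (· - a) c suf).1 (mlk (· - a) c suf).2 ++ [Step.D])
        = tw ((mlk (· + 1) (mlk (· - a) c suf).1 (mlk (· - a) c suf).2).1.1 + 1,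
            (mlk (· + 1) (mlk (· - a) c suf).1 (mlk (· - a) c suf).2).1.2)
          (mlk (· + 1) (mlk (· - a) c suf).1 (mlk (· - a) c suf).2).2 := by
      rw [tw_incFirst]
      congr 1
      have h1 := tw_mlk_add 1 (mlk (· - a) c suf).1 (mlk (· - a) c suf).2
      rw [Prod.mk.eta, h1]
      simp
    rw [heq]
    have hok_g := mlk_ok (· - a) c suf hokc hoksuf (by show 1 ≤ lastK c suf - a; omega)
    have hok_m := mlk_ok (· + 1) (mlk (· - a) c suf).1 (mlk (· - a) c suf).2
      hok_g.1 hok_g.2 (Nat.le_add_left 1 _)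
    apply isStrictAlt_tw
    · exact ⟨by simp, hok_m.1.2⟩
    · exact hok_m.2
    · intro v hv
      rw [vals_first 0 1 _ (mlk (· + 1) (mlk (· - a) c suf).1 (mlk (· - a) c suf).2).1.1
        _ _ (by push_cast; ring), Prod.mk.eta, vals_mlk, vals_mlk] at hv
      rw [show (1 : ℤ) = aZ + (1 - aZ) by ring, vals_shift] at hv
      obtain ⟨x, hx, rfl⟩ := List.mem_map.1 hv
      have := hsufvals x hx
      omega
    · rw [bsum_first (mlk (· + 1) (mlk (· - a) c suf).1 (mlk (· - a) c suf).2).1.1 _ _ _]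
      rw [Prod.mk.eta, bsum_mlk_add, bsum_mlk_sub a c suf hle']
      push_cast
      linarith [hsufsum, haZ]
  · -- the decomposition equation
    have h1 := tw_mlk_add a (mlk (· - a) c suf).1 (mlk (· - a) c suf).2
    rw [mlk_cancel a c suf hle'] at h1
    simp only at h1
    rw [hsplit, tw_split, tw_first_split a i1 k1 pre (by omega), h1]
    simp [List.append_assoc]

/-- every strictly alternating bargraph with at least two `H` steps
decomposes uniquely as `G = U^a G₁ H G₂ D^a` with `a ≥ 1`, `G₁` strictly alternating
and `U G₂ D` strictly alternating; moreover `a` is the height of the lowest `H` step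
of `G` and the displayed `H` is the leftmost `H` step at height `a`. -/
theorem strictAlt_decomposition :
    ∀ G : List Step, IsStrictAlt G → 2 ≤ G.count Step.H →
      (∃! t : ℕ × List Step × List Step, SADecomp t G) ∧
      (∀ t : ℕ × List Step × List Step, SADecomp t G →
        (t.1 : ℤ) ∈ colHeights 0 G ∧
        (∀ c ∈ colHeights 0 G, (t.1 : ℤ) ≤ c) ∧
        (∀ c ∈ colHeights 0 (List.replicate t.1 Step.U ++ t.2.1),
          (t.1 : ℤ) < c)) := by
  intro G hG hH
  obtain ⟨t₀, ht₀⟩ := decomp_exists hG hH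
  refine ⟨⟨t₀, ht₀, ?_⟩, fun t ht => decomp_bullets ht⟩
  intro y hy
  rcases le_total (List.replicate y.1 Step.U ++ y.2.1).length
      (List.replicate t₀.1 Step.U ++ t₀.2.1).length with h | h
  · exact decomp_eq_aux hy ht₀ h
  · exact (decomp_eq_aux ht₀ hy h).symm
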